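/- Let A be a self-adjoint operator on a two-dimensional inner product space with largest and smallest eigenvalues λ_max and λ_min, and a unit eigenvector u. For nonzero vectors x and y with ∠{x,y}>0, one has (λ_max − λ_min)·|sin(∠{x,u} − ∠{y,u})|·sin(∠{x,y}) ≤ |ρ(x) − ρ(y)| ≤ (λ_max − λ_min)·sin(∠{x,u} + ∠{y,u})·sin(∠{x,y}). -/

import Mathlib

open scoped RealInnerProductSpace
open Submodule

noncomputable section

variable {H : Type*} [NormedAddCommGroup H] [InnerProductSpace ℝ H]

/-- The Rayleigh quotient of `x` with respect to `A`. -/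
def rq (A : H →L[ℝ] H) (x : H) : ℝ := ⟪x, A x⟫ / ⟪x, x⟫

/-- The residual of `x` with respect to `A`. -/
def res (A : H →L[ℝ] H) (x : H) : H := A x - rq A x • x

/-- The acute angle between two vectors. -/
def ang (x y : H) : ℝ := Real.arccos (|⟪x, y⟫| / (‖x‖ * ‖y‖))

lemma inner_expand (u₁ u₂ : H) (hu₁ : ‖u₁‖ = 1) (hu₂ : ‖u₂‖ = 1) (horth : ⟪u₁, u₂⟫ = 0)
    (a b c d : ℝ) : ⟪a • u₁ + b • u₂, c • u₁ + d • u₂⟫ = a * c + b * d := by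
  have h11 : ⟪u₁, u₁⟫ = 1 := by rw [real_inner_self_eq_norm_sq, hu₁]; norm_num
  have h22 : ⟪u₂, u₂⟫ = 1 := by rw [real_inner_self_eq_norm_sq, hu₂]; norm_num
  have h21 : ⟪u₂, u₁⟫ = 0 := by rw [real_inner_comm]; exact horth
  simp [inner_add_left, inner_add_right, real_inner_smul_left, real_inner_smul_right,
    horth, h21, h11, h22]
  rw [hu₁, hu₂]; ring

lemma ang_cs (u₁ u₂ : H) (hu₁ : ‖u₁‖ = 1) (hu₂ : ‖u₂‖ = 1) (horth : ⟪u₁, u₂⟫ = 0)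
    (a b : ℝ) (hv : a • u₁ + b • u₂ ≠ 0) :
    Real.cos (ang (a • u₁ + b • u₂) u₁) = |a| / ‖a • u₁ + b • u₂‖ ∧
    Real.sin (ang (a • u₁ + b • u₂) u₁) = |b| / ‖a • u₁ + b • u₂‖ := by
  set v := a • u₁ + b • u₂ with hvdef
  have hr : 0 < ‖v‖ := norm_pos_iff.mpr hv
  have hr2 : ‖v‖ ^ 2 = a ^ 2 + b ^ 2 := by
    rw [← real_inner_self_eq_norm_sq, hvdef,
      inner_expand u₁ u₂ hu₁ hu₂ horth a b a b]; ring
  have hinner : ⟪v, u₁⟫ = a := by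
    have := inner_expand u₁ u₂ hu₁ hu₂ horth a b 1 0
    simpa using this
  have hang : ang v u₁ = Real.arccos (|a| / ‖v‖) := by
    rw [ang, hinner, hu₁, mul_one]
  have ha : |a| ≤ ‖v‖ := by
    nlinarith [abs_nonneg a, sq_abs a, hr]
  constructor
  · rw [hang, Real.cos_arccos (le_trans (by norm_num) (by positivity : (0:ℝ) ≤ |a| / ‖v‖))
      (by rw [div_le_one hr]; exact ha)]
  · rw [hang, Real.sin_arccos]
    have h1 : 1 - (|a| / ‖v‖) ^ 2 = (|b| / ‖v‖) ^ 2 := by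
      field_simp
      nlinarith [sq_abs a, sq_abs b]
    rw [h1, Real.sqrt_sq (by positivity)]

lemma key_ineq (l a b c d r s : ℝ) (hl : 0 ≤ l) (hr : 0 < r) (hs : 0 < s) :
    l * |(|b| / r) * (|c| / s) - (|a| / r) * (|d| / s)| * (|a * d - b * c| / (r * s))
        ≤ l * |a ^ 2 * d ^ 2 - b ^ 2 * c ^ 2| / (r ^ 2 * s ^ 2) ∧
    l * |a ^ 2 * d ^ 2 - b ^ 2 * c ^ 2| / (r ^ 2 * s ^ 2)
        ≤ l * ((|b| / r) * (|c| / s) + (|a| / r) * (|d| / s)) * (|a * d - b * c| / (r * s)) := by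
  have hrs2 : (0:ℝ) < r ^ 2 * s ^ 2 := by positivity
  have e1 : (|b| / r) * (|c| / s) - (|a| / r) * (|d| / s) = (|b| * |c| - |a| * |d|) / (r * s) := by
    field_simp
  have habs : |(|b| * |c| - |a| * |d|) / (r * s)| = (abs (|b| * |c| - |a| * |d|)) / (r * s) := by
    rw [abs_div, abs_of_pos (by positivity : (0:ℝ) < r * s)]
  have k1 : (abs (|b| * |c| - |a| * |d|)) ≤ |a * d + b * c| := by
    rw [← abs_mul, ← abs_mul]
    calc (abs (|b * c| - |a * d|)) ≤ |b * c - (-(a * d))| := by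
          rw [← abs_neg (a*d)]; exact abs_abs_sub_abs_le_abs_sub _ _
      _ = |a * d + b * c| := by rw [sub_neg_eq_add, add_comm]
  have k2 : |a * d + b * c| ≤ |b| * |c| + |a| * |d| := by
    calc |a * d + b * c| ≤ |a * d| + |b * c| := abs_add_le _ _
      _ = |b| * |c| + |a| * |d| := by rw [abs_mul, abs_mul]; ring
  have k3 : |a ^ 2 * d ^ 2 - b ^ 2 * c ^ 2| = |a * d - b * c| * |a * d + b * c| := by
    rw [← abs_mul]; ring_nf
  have hz : 0 ≤ |a * d - b * c| := abs_nonneg _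
  constructor
  · have heq : l * |(|b| / r) * (|c| / s) - (|a| / r) * (|d| / s)| * (|a * d - b * c| / (r * s))
        = l * ((abs (|b| * |c| - |a| * |d|)) * |a * d - b * c|) / (r ^ 2 * s ^ 2) := by
      rw [e1, habs]; field_simp
    rw [heq, div_le_div_iff₀ hrs2 hrs2, k3]
    nlinarith [mul_le_mul_of_nonneg_left k1 (mul_nonneg hl hz)]
  · have heq : l * ((|b| / r) * (|c| / s) + (|a| / r) * (|d| / s)) * (|a * d - b * c| / (r * s))
        = l * ((|b| * |c| + |a| * |d|) * |a * d - b * c|) / (r ^ 2 * s ^ 2) := by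
      field_simp
    rw [heq, div_le_div_iff₀ hrs2 hrs2, k3]
    nlinarith [mul_le_mul_of_nonneg_left k2 (mul_nonneg hl hz)]

/-- In a two-dimensional space with eigenvalues `λ_max ≥ λ_min` of a self-adjoint `A` and a
unit eigenvector `u` (for either eigenvalue), for nonzero `x, y` with `∠{x,y} > 0`:
`(λmax − λmin)·|sin(∠{x,u} − ∠{y,u})|·sin∠{x,y} ≤ |ρ(x) − ρ(y)|
  ≤ (λmax − λmin)·sin(∠{x,u} + ∠{y,u})·sin∠{x,y}`. -/
theorem stmt_11 [FiniteDimensional ℝ H] (hdim : Module.finrank ℝ H = 2)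
    (A : H →L[ℝ] H) (hA : IsSelfAdjoint A)
    (lmax lmin : ℝ) (hl : lmin ≤ lmax) (u₁ u₂ : H) (hu₁ : ‖u₁‖ = 1) (hu₂ : ‖u₂‖ = 1)
    (horth : ⟪u₁, u₂⟫ = 0) (he₁ : A u₁ = lmax • u₁) (he₂ : A u₂ = lmin • u₂)
    (u : H) (hu : u = u₁ ∨ u = u₂)
    (x y : H) (hx : x ≠ 0) (hy : y ≠ 0) (hang : 0 < ang x y) :
    (lmax - lmin) * |Real.sin (ang x u - ang y u)| * Real.sin (ang x y)
        ≤ |rq A x - rq A y| ∧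
    |rq A x - rq A y|
        ≤ (lmax - lmin) * Real.sin (ang x u + ang y u) * Real.sin (ang x y) := by
  have h21 : ⟪u₂, u₁⟫ = 0 := by rw [real_inner_comm]; exact horth
  have h11 : ⟪u₁, u₁⟫ = 1 := by rw [real_inner_self_eq_norm_sq, hu₁]; norm_num
  have h22 : ⟪u₂, u₂⟫ = 1 := by rw [real_inner_self_eq_norm_sq, hu₂]; norm_num
  have hsp : Submodule.span ℝ ({u₁, u₂} : Set H) = ⊤ := by
    have ho : Orthonormal ℝ (![u₁, u₂]) := by
      rw [orthonormal_iff_ite]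
      intro i j
      fin_cases i <;> fin_cases j <;> simp [horth, h21, h11, h22, hu₁, hu₂]
    have := ho.linearIndependent.span_eq_top_of_card_eq_finrank (by simp [hdim])
    simpa [Set.pair_comm] using this
  obtain ⟨a, b, hx'⟩ : ∃ a b : ℝ, a • u₁ + b • u₂ = x := by
    rw [← Submodule.mem_span_pair, hsp]; trivial
  obtain ⟨c, d, hy'⟩ : ∃ c d : ℝ, c • u₁ + d • u₂ = y := by
    rw [← Submodule.mem_span_pair, hsp]; trivial
  subst hx' hy'
  have hr : 0 < ‖a • u₁ + b • u₂‖ := norm_pos_iff.mpr hx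
  have hs : 0 < ‖c • u₁ + d • u₂‖ := norm_pos_iff.mpr hy
  have hr2 : ‖a • u₁ + b • u₂‖ ^ 2 = a ^ 2 + b ^ 2 := by
    rw [← real_inner_self_eq_norm_sq, inner_expand u₁ u₂ hu₁ hu₂ horth a b a b]; ring
  have hs2 : ‖c • u₁ + d • u₂‖ ^ 2 = c ^ 2 + d ^ 2 := by
    rw [← real_inner_self_eq_norm_sq, inner_expand u₁ u₂ hu₁ hu₂ horth c d c d]; ring
  have ha2 : a ^ 2 + b ^ 2 ≠ 0 := by rw [← hr2]; positivity
  have hc2 : c ^ 2 + d ^ 2 ≠ 0 := by rw [← hs2]; positivity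
  -- Rayleigh quotients
  have hAx : A (a • u₁ + b • u₂) = (lmax * a) • u₁ + (lmin * b) • u₂ := by
    rw [map_add, ContinuousLinearMap.map_smul, ContinuousLinearMap.map_smul, he₁, he₂,
      smul_smul, smul_smul, mul_comm a lmax, mul_comm b lmin]
  have hAy : A (c • u₁ + d • u₂) = (lmax * c) • u₁ + (lmin * d) • u₂ := by
    rw [map_add, ContinuousLinearMap.map_smul, ContinuousLinearMap.map_smul, he₁, he₂,
      smul_smul, smul_smul, mul_comm c lmax, mul_comm d lmin]
  have hrqx : rq A (a • u₁ + b • u₂) = (lmax * a ^ 2 + lmin * b ^ 2) / (a ^ 2 + b ^ 2) := by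
    rw [rq, hAx, inner_expand u₁ u₂ hu₁ hu₂ horth a b (lmax * a) (lmin * b),
      inner_expand u₁ u₂ hu₁ hu₂ horth a b a b]
    congr 1 <;> ring
  have hrqy : rq A (c • u₁ + d • u₂) = (lmax * c ^ 2 + lmin * d ^ 2) / (c ^ 2 + d ^ 2) := by
    rw [rq, hAy, inner_expand u₁ u₂ hu₁ hu₂ horth c d (lmax * c) (lmin * d),
      inner_expand u₁ u₂ hu₁ hu₂ horth c d c d]
    congr 1 <;> ring
  have hdiff : |rq A (a • u₁ + b • u₂) - rq A (c • u₁ + d • u₂)|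
      = (lmax - lmin) * |a ^ 2 * d ^ 2 - b ^ 2 * c ^ 2|
        / (‖a • u₁ + b • u₂‖ ^ 2 * ‖c • u₁ + d • u₂‖ ^ 2) := by
    have : rq A (a • u₁ + b • u₂) - rq A (c • u₁ + d • u₂)
        = (lmax - lmin) * (a ^ 2 * d ^ 2 - b ^ 2 * c ^ 2)
          / (‖a • u₁ + b • u₂‖ ^ 2 * ‖c • u₁ + d • u₂‖ ^ 2) := by
      rw [hrqx, hrqy, hr2, hs2]
      field_simp
      ring
    rw [this, abs_div, abs_mul, abs_of_nonneg (sub_nonneg.mpr hl),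
      abs_of_pos (mul_pos (pow_pos hr 2) (pow_pos hs 2))]
  -- sine of the angle between x and y
  have hsinxy : Real.sin (ang (a • u₁ + b • u₂) (c • u₁ + d • u₂))
      = |a * d - b * c| / (‖a • u₁ + b • u₂‖ * ‖c • u₁ + d • u₂‖) := by
    have hkey : (‖a • u₁ + b • u₂‖ * ‖c • u₁ + d • u₂‖) ^ 2
        = (a * c + b * d) ^ 2 + (a * d - b * c) ^ 2 := by
      rw [mul_pow, hr2, hs2]; ring
    rw [ang, inner_expand u₁ u₂ hu₁ hu₂ horth a b c d, Real.sin_arccos]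
    have h1 : 1 - (|a * c + b * d| / (‖a • u₁ + b • u₂‖ * ‖c • u₁ + d • u₂‖)) ^ 2
        = (|a * d - b * c| / (‖a • u₁ + b • u₂‖ * ‖c • u₁ + d • u₂‖)) ^ 2 := by
      rw [div_pow, div_pow, sq_abs, sq_abs]
      field_simp
      linarith [hkey]
    rw [h1, Real.sqrt_sq (by positivity)]
  rw [hdiff, hsinxy]
  rcases hu with h | h <;> rw [h]
  · obtain ⟨hcx, hsx⟩ := ang_cs u₁ u₂ hu₁ hu₂ horth a b hx
    obtain ⟨hcy, hsy⟩ := ang_cs u₁ u₂ hu₁ hu₂ horth c d hy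
    rw [Real.sin_sub, Real.sin_add, hcx, hsx, hcy, hsy]
    exact key_ineq (lmax - lmin) a b c d _ _ (by linarith) hr hs
  · have hxc : a • u₁ + b • u₂ = b • u₂ + a • u₁ := add_comm _ _
    have hyc : c • u₁ + d • u₂ = d • u₂ + c • u₁ := add_comm _ _
    obtain ⟨hcx, hsx⟩ := ang_cs u₂ u₁ hu₂ hu₁ h21 b a (hxc ▸ hx)
    obtain ⟨hcy, hsy⟩ := ang_cs u₂ u₁ hu₂ hu₁ h21 d c (hyc ▸ hy)
    rw [← hxc] at hcx hsx
    rw [← hyc] at hcy hsy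
    rw [Real.sin_sub, Real.sin_add, hcx, hsx, hcy, hsy]
    have := key_ineq (lmax - lmin) b a d c ‖a • u₁ + b • u₂‖ ‖c • u₁ + d • u₂‖
      (by linarith) hr hs
    have e1 : |b * c - a * d| = |a * d - b * c| := abs_sub_comm _ _
    have e2 : |b ^ 2 * c ^ 2 - a ^ 2 * d ^ 2| = |a ^ 2 * d ^ 2 - b ^ 2 * c ^ 2| :=
      abs_sub_comm _ _
    rw [e1, e2] at this
    exact this
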